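/- For every d ≥ 1, there exist a matroid M, a labeling ψ: E(M) → (ℤ₂)^d, and a basis B of M such that M has a basis B* with ψ(B*) = 0, and every basis B* with ψ(B*) = 0 satisfies |B \ B*| ≥ 2^{d-1} - 1. -/

import Mathlib

open Set

section Aux

variable {G : Type} [AddCommGroup G] [DecidableEq G]

/-- A finset closed under translation by a nonzero `s` (in a group of exponent 2)
has even cardinality. -/
lemma aux_even_closed (h2 : ∀ x : G, x + x = 0) (s : G) (hs : s ≠ 0) :
    ∀ (n : ℕ) (S : Finset G), S.card = n → (∀ x ∈ S, x + s ∈ S) → Even n := by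
  intro n
  induction n using Nat.strong_induction_on with
  | _ n ih =>
    intro S hcard hcl
    rcases S.eq_empty_or_nonempty with rfl | ⟨x, hx⟩
    · simp only [Finset.card_empty] at hcard
      exact hcard ▸ Even.zero
    · have hxs : x + s ∈ S := hcl x hx
      have hne : x + s ≠ x := by
        intro h
        exact hs (by rwa [add_eq_left] at h)
      set S' := (S.erase x).erase (x + s) with hS'
      have hmem : x + s ∈ S.erase x := Finset.mem_erase.2 ⟨hne, hxs⟩
      have hcard' : S'.card = n - 2 := by
        rw [hS', Finset.card_erase_of_mem hmem, Finset.card_erase_of_mem hx, hcard]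
        omega
      have hn2 : 2 ≤ n := by
        rw [← hcard]
        exact Finset.one_lt_card.2 ⟨x + s, hxs, x, hx, hne⟩
      have hcl' : ∀ y ∈ S', y + s ∈ S' := by
        intro y hy
        rw [hS', Finset.mem_erase, Finset.mem_erase] at hy ⊢
        obtain ⟨hy1, hy2, hy3⟩ := hy
        refine ⟨?_, ?_, hcl y hy3⟩
        · intro h
          exact hy2 (add_right_cancel h)
        · intro h
          apply hy1
          have h4 : y + s + s = x + s := by rw [h]
          rwa [add_assoc, h2, add_zero] at h4
      have := ih (n - 2) (by omega) S' hcard' hcl'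
      obtain ⟨k, hk⟩ := this
      exact ⟨k + 1, by omega⟩

/-- If `S` has odd cardinality and `s ≠ 0`, some `x ∈ S` has `x + s ∉ S`. -/
lemma aux_exists_swap (h2 : ∀ x : G, x + x = 0) (s : G) (hs : s ≠ 0)
    (S : Finset G) (hodd : Odd S.card) : ∃ x ∈ S, x + s ∉ S := by
  by_contra h
  push_neg at h
  have := aux_even_closed h2 s hs S.card S rfl h
  exact (Nat.not_even_iff_odd.2 hodd) this

end Aux

/-- For every `d ≥ 1` there exist a matroid `M`, a labeling
`ψ : E(M) → (ℤ₂)^d` and a basis `B` such that `M` has a zero basis, but every zero basis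
`B*` satisfies `|B \ B*| ≥ 2^{d-1} - 1`. -/
theorem stmt_17 (d : ℕ) (hd : 1 ≤ d) :
    ∃ (α : Type) (M : Matroid α) (ψ : α → (Fin d → ZMod 2)) (B : Set α),
      M.IsBase B ∧
      (∃ Bstar, M.IsBase Bstar ∧ (∑ᶠ e ∈ Bstar, ψ e) = 0) ∧
      (∀ Bstar, M.IsBase Bstar → (∑ᶠ e ∈ Bstar, ψ e) = 0 →
        2 ^ (d - 1) - 1 ≤ (B \ Bstar).ncard) := by
  classical
  set G := (Fin d → ZMod 2) with hG
  have h2 : ∀ x : G, x + x = 0 := by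
    intro x; funext i
    show x i + x i = 0
    exact CharTwo.add_self_eq_zero _
  set r : ℕ := 2 ^ (d - 1) - 1 with hr
  have hcardG : Fintype.card G = 2 ^ d := by
    show Fintype.card (Fin d → ZMod 2) = 2 ^ d
    simp [ZMod.card]
  have hpow : 2 ^ d = 2 * 2 ^ (d - 1) := by
    conv_lhs => rw [show d = (d - 1) + 1 by omega]
    ring
  have hpow1 : 1 ≤ 2 ^ (d - 1) := Nat.one_le_two_pow
  -- a zero-sum set B₀ of size r
  have hB0 : ∃ B₀ : Finset G, B₀.card = r ∧ (∑ x ∈ B₀, x) = 0 := by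
    obtain ⟨S₀, -, hS₀⟩ := Finset.exists_subset_card_eq
      (s := (Finset.univ : Finset G)) (n := r) (by rw [Finset.card_univ, hcardG]; omega)
    by_cases hsum : (∑ x ∈ S₀, x) = 0
    · exact ⟨S₀, hS₀, hsum⟩
    · rcases Nat.eq_or_lt_of_le hd with hd1 | hd2
      · -- d = 1 : r = 0, so S₀ = ∅ and the sum is 0, contradiction
        exfalso
        have hr0 : r = 0 := by rw [hr, ← hd1]; norm_num
        rw [Finset.card_eq_zero.1 (hS₀.trans hr0)] at hsum
        simp at hsum
      · -- d ≥ 2 : r is odd, swap an element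
        have h21 : 2 ≤ 2 ^ (d - 1) := by
          have := Nat.pow_le_pow_right (show 0 < 2 by norm_num) (show 1 ≤ d - 1 by omega)
          simpa using this
        have hodd : Odd S₀.card := by
          rw [hS₀, hr]
          obtain ⟨k, hk⟩ : Even (2 ^ (d - 1)) := by
            rw [show d - 1 = (d - 2) + 1 by omega, pow_succ]
            exact Even.mul_left even_two _
          exact ⟨k - 1, by omega⟩
        obtain ⟨x, hxS, hxsS⟩ := aux_exists_swap h2 _ hsum S₀ hodd
        refine ⟨insert (x + ∑ y ∈ S₀, y) (S₀.erase x), ?_, ?_⟩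
        · rw [Finset.card_insert_of_notMem
            (fun h ↦ hxsS (Finset.mem_of_mem_erase h)),
            Finset.card_erase_of_mem hxS, hS₀]
          omega
        · rw [Finset.sum_insert (fun h ↦ hxsS (Finset.mem_of_mem_erase h))]
          have hkey := Finset.add_sum_erase S₀ id hxS
          simp only [id] at hkey
          -- x + ∑ erase = ∑ S₀
          have herase : (∑ y ∈ S₀.erase x, y) = x + ∑ y ∈ S₀, y := by
            rw [← hkey, ← add_assoc, h2, zero_add]
          rw [herase, ← add_assoc]
          rw [show x + ∑ y ∈ S₀, y + x = (∑ y ∈ S₀, y) + (x + x) by ring, h2, add_zero]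
          exact h2 _
  obtain ⟨B₀, hB₀card, hB₀sum⟩ := hB0
  -- a base B of size r disjoint from B₀ which is either non-zero-sum or equal to B₀
  have hBex : ∃ B : Finset G, B.card = r ∧ Disjoint B B₀ ∧
      ((∑ x ∈ B, x) ≠ 0 ∨ B = B₀) := by
    rcases Nat.eq_or_lt_of_le hd with hd1 | hd2
    · -- d = 1 : r = 0, B₀ = ∅, take B = B₀
      have hr0 : r = 0 := by rw [hr, ← hd1]; norm_num
      have : B₀ = ∅ := Finset.card_eq_zero.1 (hB₀card.trans hr0)
      exact ⟨B₀, hB₀card, by simp [this], Or.inr rfl⟩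
    · -- d ≥ 2
      have h21 : 2 ≤ 2 ^ (d - 1) := by
        have := Nat.pow_le_pow_right (show 0 < 2 by norm_num) (show 1 ≤ d - 1 by omega)
        simpa using this
      set C := B₀ᶜ with hC
      have hCcard : C.card = r + 2 := by
        rw [hC, Finset.card_compl, hB₀card, hcardG, hr]
        omega
      obtain ⟨T, hTC, hT3⟩ := Finset.exists_subset_card_eq
        (s := C) (n := 3) (by omega)
      obtain ⟨a, b, c, hab, hac, hbc, hTabc⟩ := Finset.card_eq_three.1 hT3
      have haC : a ∈ C := hTC (by rw [hTabc]; simp)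
      have hbC : b ∈ C := hTC (by rw [hTabc]; simp)
      have hcC : c ∈ C := hTC (by rw [hTabc]; simp)
      -- two candidate sets
      have key : ∀ y ∈ C.erase a, ((C.erase a).erase y).card = r ∧
          (∑ x ∈ (C.erase a).erase y, x) = (∑ x ∈ C, x) + a + y := by
        intro y hy
        constructor
        · rw [Finset.card_erase_of_mem hy, Finset.card_erase_of_mem haC, hCcard]
          omega
        · have h1 := Finset.add_sum_erase (C.erase a) id hy
          have h2' := Finset.add_sum_erase C id haC
          simp only [id] at h1 h2'
          have : (∑ x ∈ (C.erase a).erase y, x)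
              = y + (a + ∑ x ∈ C, x) := by
            have e1 : (∑ x ∈ C.erase a, x) = a + ∑ x ∈ C, x := by
              rw [← h2', ← add_assoc, h2, zero_add]
            have e2 : (∑ x ∈ (C.erase a).erase y, x) = y + ∑ x ∈ C.erase a, x := by
              rw [← h1, ← add_assoc, h2, zero_add]
            rw [e2, e1]
          rw [this]; ring
      have hbmem : b ∈ C.erase a := Finset.mem_erase.2 ⟨Ne.symm hab, hbC⟩
      have hcmem : c ∈ C.erase a := Finset.mem_erase.2 ⟨Ne.symm hac, hcC⟩
      obtain ⟨hcb, hsb⟩ := key b hbmem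
      obtain ⟨hcc, hsc⟩ := key c hcmem
      have hne : (∑ x ∈ C, x) + a + b ≠ 0 ∨ (∑ x ∈ C, x) + a + c ≠ 0 := by
        by_contra h
        push_neg at h
        obtain ⟨e1, e2⟩ := h
        exact hbc (by
          have := e1.trans e2.symm
          exact add_left_cancel this)
      have hdisj : ∀ y, Disjoint ((C.erase a).erase y) B₀ := by
        intro y
        refine Finset.disjoint_left.2 fun z hz hzB ↦ ?_
        have : z ∈ C := Finset.mem_of_mem_erase (Finset.mem_of_mem_erase hz)
        rw [hC, Finset.mem_compl] at this
        exact this hzB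
      rcases hne with h | h
      · exact ⟨(C.erase a).erase b, hcb, hdisj b, Or.inl (by rw [hsb]; exact h)⟩
      · exact ⟨(C.erase a).erase c, hcc, hdisj c, Or.inl (by rw [hsc]; exact h)⟩
  obtain ⟨B, hBcard, hBdisj, hBgood⟩ := hBex
  -- the independence predicate
  set Indep : Set G → Prop := fun I =>
    I.ncard ≤ r ∧ (I.ncard = r → (∑ᶠ x ∈ I, x) ≠ 0 ∨ I = ↑B₀) with hIndep
  have indep_empty : Indep ∅ := by
    refine ⟨by simp, fun h ↦ ?_⟩
    right
    simp only [ncard_empty] at h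
    have : B₀ = ∅ := Finset.card_eq_zero.1 (by omega)
    simp [this]
  have indep_subset : ∀ ⦃I J : Set G⦄, Indep J → I ⊆ J → Indep I := by
    intro I J hJ hIJ
    have hle : I.ncard ≤ J.ncard := ncard_le_ncard hIJ (toFinite J)
    refine ⟨hle.trans hJ.1, fun hIr ↦ ?_⟩
    have : I = J := eq_of_subset_of_ncard_le hIJ (by omega) (toFinite J)
    subst this
    exact hJ.2 hIr
  have indep_aug : ∀ ⦃I J : Set G⦄, Indep I → Indep J → I.ncard < J.ncard →
      ∃ e ∈ J, e ∉ I ∧ Indep (insert e I) := by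
    intro I J hI hJ hlt
    have hJr : J.ncard ≤ r := hJ.1
    by_cases hIr : I.ncard + 1 < r
    · obtain ⟨e, heJ, heI⟩ := exists_mem_notMem_of_ncard_lt_ncard hlt (toFinite I)
      refine ⟨e, heJ, heI, ?_, fun h ↦ absurd h (by
        rw [ncard_insert_of_notMem heI (toFinite I)]; omega)⟩
      rw [ncard_insert_of_notMem heI (toFinite I)]; omega
    · have hIr' : I.ncard + 1 = r := by omega
      have hJr' : J.ncard = r := by omega
      have hJprop : (∑ᶠ x ∈ J, x) ≠ 0 ∨ J = ↑B₀ := hJ.2 hJr'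
      have hJI : (J ∩ I).ncard + (J \ I).ncard = J.ncard :=
        ncard_inter_add_ncard_diff_eq_ncard J I (toFinite J)
      by_cases h1 : 1 < (J \ I).ncard
      · obtain ⟨e, heJI, e', he'JI, hee'⟩ := (one_lt_ncard (toFinite _)).1 h1
        have heI : e ∉ I := heJI.2
        have he'I : e' ∉ I := he'JI.2
        have hsum : ∀ x : G, x ∉ I → (∑ᶠ y ∈ insert x I, y) = x + ∑ᶠ y ∈ I, y := by
          intro x hx
          exact finsum_mem_insert _ hx (toFinite I)
        by_cases hez : e + ∑ᶠ y ∈ I, y = 0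
        · refine ⟨e', he'JI.1, he'I, ?_, fun _ ↦ Or.inl ?_⟩
          · rw [ncard_insert_of_notMem he'I (toFinite I)]; omega
          · rw [hsum e' he'I]
            intro h
            exact hee' (add_right_cancel (hez.trans h.symm))
        · refine ⟨e, heJI.1, heI, ?_, fun _ ↦ Or.inl ?_⟩
          · rw [ncard_insert_of_notMem heI (toFinite I)]; omega
          · rw [hsum e heI]; exact hez
      · -- |J \ I| ≤ 1, so I ⊆ J and insert e I = J
        have hJd : (J \ I).ncard = 1 ∧ (J ∩ I).ncard = I.ncard := by
          have h3 : (J ∩ I).ncard ≤ I.ncard := ncard_le_ncard inter_subset_right (toFinite I)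
          omega
        have hIJ2 : I ⊆ J := by
          have hJIeq : J ∩ I = I :=
            eq_of_subset_of_ncard_le inter_subset_right (by omega) (toFinite I)
          rw [← hJIeq]
          exact inter_subset_left
        obtain ⟨e, he⟩ := ncard_eq_one.1 hJd.1
        have heJ : e ∈ J := by
          have : e ∈ J \ I := by rw [he]; exact rfl
          exact this.1
        have heI : e ∉ I := by
          have : e ∈ J \ I := by rw [he]; exact rfl
          exact this.2
        have hins : insert e I = J := by
          rw [← union_diff_cancel hIJ2, he]
          ext z; simp [or_comm]
        exact ⟨e, heJ, heI, hins ▸ hJ⟩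
  -- build the matroid
  have hE : (Set.univ : Set G).Finite := finite_univ
  set M0 := IndepMatroid.ofFinite hE Indep indep_empty indep_subset indep_aug
    (fun I _ => subset_univ I) with hM0
  set M := M0.matroid with hM
  have hMindep : ∀ I : Set G, M.Indep I ↔ Indep I := by
    intro I
    rw [hM, IndepMatroid.matroid_indep_iff, hM0]
    simp
  have hB₀indep : Indep ↑B₀ :=
    ⟨by rw [ncard_coe_finset]; omega, fun _ => Or.inr rfl⟩
  have hbase : ∀ Bs : Set G, M.IsBase Bs ↔ Indep Bs ∧ Bs.ncard = r := by
    intro Bs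
    rw [Matroid.isBase_iff_maximal_indep]
    constructor
    · rintro ⟨hind, hmax⟩
      rw [hMindep] at hind
      refine ⟨hind, ?_⟩
      by_contra hne
      have hlt : Bs.ncard < r := lt_of_le_of_ne hind.1 hne
      obtain ⟨e, heB₀, heBs, hins⟩ := indep_aug hind hB₀indep
        (by rw [ncard_coe_finset, hB₀card]; exact hlt)
      have hsub := hmax (y := insert e Bs) ((hMindep _).2 hins) (subset_insert _ _)
      exact heBs (hsub (mem_insert e Bs))
    · rintro ⟨hind, hcard⟩
      refine ⟨(hMindep Bs).2 hind, fun I hI hsub => ?_⟩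
      rw [hMindep] at hI
      have hle : I.ncard ≤ Bs.ncard := by rw [hcard]; exact hI.1
      exact (eq_of_subset_of_ncard_le hsub hle (toFinite I)).symm.subset
  refine ⟨G, M, fun x => x, ↑B, ?_, ⟨↑B₀, ?_, ?_⟩, ?_⟩
  · refine (hbase ↑B).2 ⟨⟨by rw [ncard_coe_finset, hBcard], fun _ => ?_⟩,
      by rw [ncard_coe_finset, hBcard]⟩
    rcases hBgood with h | h
    · left
      rwa [finsum_mem_coe_finset]
    · right
      exact congrArg (fun t : Finset G => (t : Set G)) h
  · exact (hbase ↑B₀).2 ⟨hB₀indep, by rw [ncard_coe_finset, hB₀card]⟩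
  · rw [finsum_mem_coe_finset]
    exact hB₀sum
  · intro Bstar hBs hBsum
    obtain ⟨hind, hcard⟩ := (hbase Bstar).1 hBs
    have hprop := hind.2 hcard
    have hBstar : Bstar = ↑B₀ := by
      rcases hprop with h | h
      · exact absurd hBsum h
      · exact h
    rw [hBstar]
    have hd : (↑B : Set G) \ ↑B₀ = ↑B := by
      have : Disjoint (↑B : Set G) ↑B₀ := Finset.disjoint_coe.2 hBdisj
      exact this.sdiff_eq_left
    rw [hd, ncard_coe_finset, hBcard]
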